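/- Let X₁,…,Xₙ be ℕ-valued random variables on a probability space with S = X₁+⋯+Xₙ and S₋₁ = X₂+⋯+Xₙ. Suppose X₁ has a negative binomial distribution with parameters r > 0 and q ∈ (0,1), i.e. P(X₁ = k) = C(r+k−1, k) q^r (1−q)^k for k ∈ ℕ, and that X₁ is independent of S₋₁. Then for every integer k ≥ 1, E[X₁ · 1_{\{S=k\}}] = r · ∑_{j=1}^{k} (1−q)^j · P(S = k−j). -/

import Mathlib

open MeasureTheory ProbabilityTheory

/-- If `X₁` has a negative binomial distribution with parameters `r > 0` and
`q ∈ (0,1)`, i.e. `P(X₁ = k) = C(r+k-1, k) q^r (1-q)^k` where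
`C(r+k-1,k) = r(r+1)⋯(r+k-1)/k!`, and `X₁` is independent of `S₋₁`, then for every `k ≥ 1`,
`E[X₁ · 1_{S=k}] = r ∑_{j=1}^{k} (1-q)^j P(S = k-j)`. -/
theorem expected_allocation_negative_binomial
    {Ω : Type*} [MeasurableSpace Ω] (μ : Measure Ω) [IsProbabilityMeasure μ]
    (n : ℕ) (X : Fin (n + 1) → Ω → ℕ) (hX : ∀ i, Measurable (X i))
    (S Sm : Ω → ℕ)
    (hS : ∀ ω, S ω = ∑ i, X i ω)
    (hSm : ∀ ω, Sm ω = ∑ i : Fin n, X i.succ ω)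
    (r q : ℝ) (hr : 0 < r) (hq : q ∈ Set.Ioo (0 : ℝ) 1)
    (hnb : ∀ k : ℕ, (μ {ω | X 0 ω = k}).toReal
      = ((∏ i ∈ Finset.range k, (r + i)) / (Nat.factorial k)) * q ^ r * (1 - q) ^ k)
    (hindep : IndepFun (X 0) Sm μ) :
    ∀ k : ℕ, 1 ≤ k →
      ∫ ω in {ω | S ω = k}, (X 0 ω : ℝ) ∂μ
        = r * ∑ j ∈ Finset.Icc 1 k, (1 - q) ^ j * (μ {ω | S ω = k - j}).toReal := by
  have hSsum : ∀ ω, S ω = X 0 ω + Sm ω := by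
    intro ω; rw [hS, hSm, Fin.sum_univ_succ]
  set p : ℕ → ℝ := fun m => (μ {ω | X 0 ω = m}).toReal with hp
  set s : ℕ → ℝ := fun j => (μ {ω | Sm ω = j}).toReal with hs
  set F : ℕ → ℝ := fun k => (μ {ω | S ω = k}).toReal with hF
  have hmeasX : ∀ m : ℕ, MeasurableSet {ω | X 0 ω = m} := fun m =>
    (hX 0) (measurableSet_singleton m)
  have hmeasSm : Measurable Sm := by
    have : Sm = fun ω => ∑ i : Fin n, X i.succ ω := funext hSm
    rw [this]; exact Finset.measurable_sum _ fun i _ => hX i.succ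
  have hmeasA : ∀ k m : ℕ, MeasurableSet ({ω | X 0 ω = m} ∩ {ω | Sm ω = k - m}) :=
    fun k m => (hmeasX m).inter (hmeasSm (measurableSet_singleton (k - m)))
  have hA : ∀ k : ℕ, {ω | S ω = k}
      = ⋃ m ∈ Finset.range (k + 1), ({ω | X 0 ω = m} ∩ {ω | Sm ω = k - m}) := by
    intro k
    ext ω
    have h := hSsum ω
    simp only [Set.mem_setOf_eq, Set.mem_iUnion, Set.mem_inter_iff, Finset.mem_range,
      exists_prop]
    constructor
    · intro hk; exact ⟨X 0 ω, by omega, rfl, by omega⟩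
    · rintro ⟨m, hm, h1, h2⟩; omega
  have hdisj : ∀ k : ℕ, Set.Pairwise (Finset.range (k + 1) : Set ℕ)
      (Function.onFun Disjoint fun m => {ω | X 0 ω = m} ∩ {ω | Sm ω = k - m}) := by
    intro k m _ m' _ hne
    refine Set.disjoint_left.2 ?_
    rintro ω ⟨h1, _⟩ ⟨h2, _⟩
    exact hne (h1 ▸ h2 ▸ rfl)
  have hmu : ∀ k m : ℕ, (μ ({ω | X 0 ω = m} ∩ {ω | Sm ω = k - m})).toReal
      = p m * s (k - m) := by
    intro k m
    have h := hindep.measure_inter_preimage_eq_mul {m} {k - m}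
      (measurableSet_singleton m) (measurableSet_singleton (k - m))
    have e1 : X 0 ⁻¹' {m} = {ω | X 0 ω = m} := rfl
    have e2 : Sm ⁻¹' {k - m} = {ω | Sm ω = k - m} := rfl
    rw [e1, e2] at h
    rw [h, ENNReal.toReal_mul]
  have hFk : ∀ k : ℕ, F k = ∑ m ∈ Finset.range (k + 1), p m * s (k - m) := by
    intro k
    rw [hF]
    simp only
    rw [hA k, measure_biUnion_finset (hdisj k) (fun m _ => hmeasA k m),
      ENNReal.toReal_sum (fun m _ => measure_ne_top μ _)]
    exact Finset.sum_congr rfl fun m _ => hmu k m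
  have hint : ∀ k : ℕ, ∫ ω in {ω | S ω = k}, (X 0 ω : ℝ) ∂μ
      = ∑ m ∈ Finset.range (k + 1), (m : ℝ) * (p m * s (k - m)) := by
    intro k
    rw [hA k]
    rw [MeasureTheory.integral_biUnion_finset _ (fun m _ => hmeasA k m) (hdisj k) ?_]
    · refine Finset.sum_congr rfl fun m _ => ?_
      rw [show (∫ ω in ({ω | X 0 ω = m} ∩ {ω | Sm ω = k - m}), (X 0 ω : ℝ) ∂μ)
          = ∫ _ω in ({ω | X 0 ω = m} ∩ {ω | Sm ω = k - m}), (m : ℝ) ∂μ from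
          setIntegral_congr_fun (hmeasA k m) (fun ω hω => by
            simp only [Set.mem_inter_iff, Set.mem_setOf_eq] at hω
            exact_mod_cast hω.1)]
      rw [setIntegral_const, smul_eq_mul, measureReal_def, hmu k m]
      ring
    · intro m _
      refine (integrableOn_const (C := (m : ℝ)) (measure_ne_top μ _)).congr_fun
        (fun ω hω => ?_) (hmeasA k m)
      simp only [Set.mem_inter_iff, Set.mem_setOf_eq] at hω
      exact (by exact_mod_cast hω.1.symm : (m : ℝ) = X 0 ω)
  -- negative binomial recursion
  obtain ⟨hq0, hq1⟩ := hq
  have hrec_p : ∀ m : ℕ, ((m : ℝ) + 1) * p (m + 1) = (1 - q) * ((r + m) * p m) := by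
    intro m
    rw [hp]; simp only
    rw [hnb, hnb, Finset.prod_range_succ, Nat.factorial_succ]
    have hfac : ((Nat.factorial m : ℝ)) ≠ 0 := by
      exact_mod_cast (Nat.factorial_ne_zero m)
    have hm1 : ((m : ℝ) + 1) ≠ 0 := by positivity
    push_cast
    field_simp
    ring
  set a : ℕ → ℝ := fun k => ∑ m ∈ Finset.range (k + 1), (m : ℝ) * (p m * s (k - m)) with ha
  have ha0 : a 0 = 0 := by simp [ha]
  have harec : ∀ k : ℕ, a (k + 1) = (1 - q) * (a k + r * F k) := by
    intro k
    rw [ha]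
    simp only
    rw [Finset.sum_range_succ']
    simp only [Nat.cast_zero, zero_mul, add_zero]
    push_cast
    have : ∀ m ∈ Finset.range (k + 1),
        ((m : ℝ) + 1) * (p (m + 1) * s (k - m))
          = (1 - q) * ((m : ℝ) * (p m * s (k - m)) + r * (p m * s (k - m))) := by
      intro m _
      rw [show ((m : ℝ) + 1) * (p (m + 1) * s (k - m))
          = (((m : ℝ) + 1) * p (m + 1)) * s (k - m) by ring, hrec_p m]
      ring
    rw [Finset.sum_congr rfl this, ← Finset.mul_sum, Finset.sum_add_distrib,
      ← Finset.mul_sum, hFk k]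
  have hclaim : ∀ k : ℕ, a k = r * ∑ j ∈ Finset.range k, (1 - q) ^ (j + 1) * F (k - (j + 1)) := by
    intro k
    induction k with
    | zero => simp [ha0]
    | succ k ih =>
      rw [harec k, ih, Finset.sum_range_succ']
      have : ∀ j ∈ Finset.range k,
          (1 - q) ^ (j + 1 + 1) * F (k + 1 - (j + 1 + 1))
            = (1 - q) * ((1 - q) ^ (j + 1) * F (k - (j + 1))) := by
        intro j _
        have hsub : k + 1 - (j + 1 + 1) = k - (j + 1) := by omega
        rw [hsub]; ring
      rw [Finset.sum_congr rfl this, ← Finset.mul_sum]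
      simp only [Nat.zero_add, pow_one, Nat.add_sub_cancel]
      ring
  intro k hk
  rw [hint k]
  have : (∑ j ∈ Finset.Icc 1 k, (1 - q) ^ j * (μ {ω | S ω = k - j}).toReal)
      = ∑ j ∈ Finset.range k, (1 - q) ^ (j + 1) * F (k - (j + 1)) := by
    have himg : Finset.Icc 1 k = Finset.image (fun a => a + 1) (Finset.range k) := by
      ext x
      simp only [Finset.mem_Icc, Finset.mem_image, Finset.mem_range]
      constructor
      · intro h; exact ⟨x - 1, by omega, by omega⟩
      · rintro ⟨a, ha, rfl⟩; omega
    rw [himg, Finset.sum_image (fun a _ b _ h => by omega)]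
  rw [this]
  exact hclaim k
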